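/- For a maximal monotone multifunction T, the Fitzpatrick function F_{T,2}(x,y) = sup over (x₁,y₁) in the graph of T of (⟨x, y₁⟩ + ⟨x₁, y⟩ − ⟨x₁, y₁⟩) satisfies F_{T,2}(x,y) ≥ ⟨x,y⟩ for all (x,y), with equality if and only if y ∈ Tx. -/

import Mathlib

/-- For a maximal monotone multifunction `T`, the Fitzpatrick function
`F_{T,2}(x,y) = sup_{(x₁,y₁) ∈ G(T)} (⟨x, y₁⟩ + ⟨x₁, y⟩ − ⟨x₁, y₁⟩)` (in `EReal`)
satisfies `F_{T,2}(x,y) ≥ ⟨x,y⟩`, with equality iff `y ∈ T x`. -/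
theorem stmt2
    {X : Type*} [NormedAddCommGroup X] [NormedSpace ℝ X] [CompleteSpace X]
    (T : X → Set (StrongDual ℝ X))
    (hmono : ∀ x₁ y₁ x₂ y₂, y₁ ∈ T x₁ → y₂ ∈ T x₂ → 0 ≤ (y₂ - y₁) (x₂ - x₁))
    (hmax : ∀ x y, (∀ x₁ y₁, y₁ ∈ T x₁ → 0 ≤ (y - y₁) (x - x₁)) → y ∈ T x) :
    ∀ (x : X) (y : StrongDual ℝ X),
      ((y x : ℝ) : EReal) ≤
        (⨆ p : {p : X × StrongDual ℝ X // p.2 ∈ T p.1},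
          ((p.1.2 x + y p.1.1 - p.1.2 p.1.1 : ℝ) : EReal)) ∧
      ((⨆ p : {p : X × StrongDual ℝ X // p.2 ∈ T p.1},
          ((p.1.2 x + y p.1.1 - p.1.2 p.1.1 : ℝ) : EReal)) = ((y x : ℝ) : EReal)
        ↔ y ∈ T x) := by
  intro x y
  -- key algebraic identity
  have key : ∀ (x₁ : X) (y₁ : StrongDual ℝ X),
      y₁ x + y x₁ - y₁ x₁ = y x - (y - y₁) (x - x₁) := by
    intro x₁ y₁
    simp [ContinuousLinearMap.sub_apply, map_sub]
    ring
  have hge : ((y x : ℝ) : EReal) ≤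
      (⨆ p : {p : X × StrongDual ℝ X // p.2 ∈ T p.1},
        ((p.1.2 x + y p.1.1 - p.1.2 p.1.1 : ℝ) : EReal)) := by
    by_cases hy : y ∈ T x
    · have := le_iSup (fun p : {p : X × StrongDual ℝ X // p.2 ∈ T p.1} =>
        ((p.1.2 x + y p.1.1 - p.1.2 p.1.1 : ℝ) : EReal)) ⟨(x, y), hy⟩
      simpa using this
    · have h : ¬ ∀ x₁ y₁, y₁ ∈ T x₁ → 0 ≤ (y - y₁) (x - x₁) := fun h => hy (hmax x y h)
      push_neg at h
      obtain ⟨x₁, y₁, h1, hlt⟩ := h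
      have := le_iSup (fun p : {p : X × StrongDual ℝ X // p.2 ∈ T p.1} =>
        ((p.1.2 x + y p.1.1 - p.1.2 p.1.1 : ℝ) : EReal)) ⟨(x₁, y₁), h1⟩
      refine le_trans ?_ this
      rw [EReal.coe_le_coe_iff, key x₁ y₁]
      linarith
  refine ⟨hge, ?_, ?_⟩
  · intro heq
    apply hmax
    intro x₁ y₁ h1
    by_contra hneg
    push_neg at hneg
    have hle := le_iSup (fun p : {p : X × StrongDual ℝ X // p.2 ∈ T p.1} =>
        ((p.1.2 x + y p.1.1 - p.1.2 p.1.1 : ℝ) : EReal)) ⟨(x₁, y₁), h1⟩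
    rw [heq] at hle
    rw [EReal.coe_le_coe_iff, key x₁ y₁] at hle
    linarith
  · intro hy
    apply le_antisymm _ hge
    apply iSup_le
    rintro ⟨⟨x₁, y₁⟩, h1⟩
    simp only
    rw [EReal.coe_le_coe_iff, key x₁ y₁]
    have := hmono x₁ y₁ x y h1 hy
    linarith
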